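/- Let q ≥ 2, θ ∈ ℝ, and define T(N) := (1/N) Σ_{n=0}^{N−1} exp(2πi · s_q(n) · θ). Then for every m ∈ ℕ₀, |T(q^m)| ≤ (1 − (16(q−1)/q²)·‖θ‖²)^{m/2}. -/

import Mathlib

open Finset Real

/-- `T(N) = (1/N) Σ_{n=0}^{N−1} exp(2πi · s_q(n) · θ)`, where `s_q` is the `q`-ary
sum-of-digits function. -/
noncomputable def Tsod (q : ℕ) (θ : ℝ) (N : ℕ) : ℂ :=
  (N : ℂ)⁻¹ * ∑ n ∈ Finset.range N,
    Complex.exp (2 * Real.pi * Complex.I * ((Nat.digits q n).sum : ℂ) * (θ : ℂ))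

lemma sum_range_mul_eq {M : Type*} [AddCommMonoid M] (f : ℕ → M) (a b : ℕ) :
    ∑ n ∈ Finset.range (a * b), f n =
      ∑ i ∈ Finset.range a, ∑ j ∈ Finset.range b, f (b * i + j) := by
  induction a with
  | zero => simp
  | succ a ih =>
      rw [Finset.sum_range_succ, ← ih, Nat.succ_mul, Finset.sum_range_add]
      congr 1
      exact Finset.sum_congr rfl fun j _ => by ring_nf

lemma digits_sum_mul_add {q : ℕ} (hq : 2 ≤ q) (i j : ℕ) (hj : j < q) :
    (Nat.digits q (q * i + j)).sum = j + (Nat.digits q i).sum := by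
  rcases Nat.eq_zero_or_pos (q * i + j) with h0 | hpos
  · have hi : i = 0 := by
      rcases Nat.eq_zero_or_pos i with h | h
      · exact h
      · exfalso; nlinarith [Nat.add_le_add (Nat.mul_le_mul_left q h) (Nat.zero_le j)]
    have hjz : j = 0 := by omega
    simp [hi, hjz]
  · rw [Nat.digits_def' (by omega : 1 < q) hpos]
    have h1 : (q * i + j) % q = j := by
      rw [Nat.mul_add_mod]; exact Nat.mod_eq_of_lt hj
    have h2 : (q * i + j) / q = i := by
      rw [Nat.mul_add_div (by omega), Nat.div_eq_of_lt hj, Nat.add_zero]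
    rw [h1, h2, List.sum_cons]

lemma sum_exp_digits_pow {q : ℕ} (hq : 2 ≤ q) (θ : ℝ) (m : ℕ) :
    ∑ n ∈ Finset.range (q ^ m),
        Complex.exp (2 * Real.pi * Complex.I * ((Nat.digits q n).sum : ℂ) * (θ : ℂ)) =
      (∑ j ∈ Finset.range q,
        Complex.exp (2 * Real.pi * Complex.I * (j : ℂ) * (θ : ℂ))) ^ m := by
  induction m with
  | zero => simp
  | succ m ih =>
      have hsplit : q ^ (m + 1) = q ^ m * q := by ring
      rw [hsplit, sum_range_mul_eq]
      have : ∀ i ∈ Finset.range (q ^ m), ∀ j ∈ Finset.range q,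
          Complex.exp (2 * Real.pi * Complex.I * ((Nat.digits q (q * i + j)).sum : ℂ) * (θ : ℂ)) =
            Complex.exp (2 * Real.pi * Complex.I * (j : ℂ) * (θ : ℂ)) *
              Complex.exp (2 * Real.pi * Complex.I * ((Nat.digits q i).sum : ℂ) * (θ : ℂ)) := by
        intro i _ j hj
        rw [digits_sum_mul_add hq i j (Finset.mem_range.mp hj), ← Complex.exp_add]
        push_cast
        ring_nf
      calc ∑ i ∈ Finset.range (q ^ m), ∑ j ∈ Finset.range q,
              Complex.exp (2 * Real.pi * Complex.I * ((Nat.digits q (q * i + j)).sum : ℂ) * (θ : ℂ))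
          = ∑ i ∈ Finset.range (q ^ m), ∑ j ∈ Finset.range q,
              Complex.exp (2 * Real.pi * Complex.I * (j : ℂ) * (θ : ℂ)) *
                Complex.exp (2 * Real.pi * Complex.I * ((Nat.digits q i).sum : ℂ) * (θ : ℂ)) := by
            refine Finset.sum_congr rfl fun i hi => Finset.sum_congr rfl fun j hj => this i hi j hj
        _ = (∑ j ∈ Finset.range q, Complex.exp (2 * Real.pi * Complex.I * (j : ℂ) * (θ : ℂ))) *
              ∑ i ∈ Finset.range (q ^ m),
                Complex.exp (2 * Real.pi * Complex.I * ((Nat.digits q i).sum : ℂ) * (θ : ℂ)) := by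
            rw [Finset.sum_comm]
            rw [Finset.sum_mul]
            exact Finset.sum_congr rfl fun j _ => by rw [Finset.mul_sum]
        _ = _ := by rw [ih]; ring

/-- `sin²(πθ) ≥ 4‖θ‖²` -/
lemma four_normdist_sq_le_sin_sq (θ : ℝ) :
    4 * |θ - round θ| ^ 2 ≤ Real.sin (Real.pi * θ) ^ 2 := by
  set δ : ℝ := θ - round θ with hδ
  have h1 : Real.sin (Real.pi * θ) ^ 2 = Real.sin (Real.pi * δ) ^ 2 := by
    have : Real.pi * θ = Real.pi * δ + (round θ : ℤ) * Real.pi := by ring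
    rw [this, Real.sin_add_int_mul_pi, mul_pow]
    have hone : (((-1 : ℝ) ^ (round θ)) ^ 2 : ℝ) = 1 := by
      rw [← zpow_natCast (((-1 : ℝ)) ^ (round θ)) 2, ← zpow_mul, mul_comm, zpow_mul]
      norm_num
    rw [hone, one_mul]
  have h2 : Real.sin (Real.pi * δ) ^ 2 = Real.sin (Real.pi * |δ|) ^ 2 := by
    rcases abs_cases δ with ⟨h, _⟩ | ⟨h, _⟩
    · rw [h]
    · rw [h]; rw [show Real.pi * -δ = -(Real.pi * δ) by ring, Real.sin_neg]; ring
  have hd2 : |δ| ≤ 1 / 2 := abs_sub_round θ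
  have hsin : 2 * |δ| ≤ Real.sin (Real.pi * |δ|) := by
    have := Real.mul_le_sin (x := Real.pi * |δ|)
      (by positivity) (by nlinarith [Real.pi_pos])
    calc 2 * |δ| = 2 / Real.pi * (Real.pi * |δ|) := by
          field_simp
      _ ≤ _ := this
  rw [h1, h2]
  nlinarith [abs_nonneg δ]

lemma exp_mul_conj_re (x y : ℝ) :
    (Complex.exp ((x : ℂ) * Complex.I) *
      (starRingEnd ℂ) (Complex.exp ((y : ℂ) * Complex.I))).re = Real.cos (x - y) := by
  rw [← Complex.exp_conj, map_mul, Complex.conj_ofReal, Complex.conj_I, ← Complex.exp_add]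
  rw [show (x : ℂ) * Complex.I + (y : ℂ) * -Complex.I = ((x - y : ℝ) : ℂ) * Complex.I by
    push_cast; ring]
  exact Complex.exp_ofReal_mul_I_re _

/-- For `q ≥ 2`, `θ ∈ ℝ` and every `m ∈ ℕ`,
`|T(q^m)| ≤ (1 − (16(q−1)/q²)·‖θ‖²)^{m/2}`, where `‖θ‖` is the distance of `θ`
to the nearest integer. -/
theorem Tsod_pow_le (q : ℕ) (hq : 2 ≤ q) (θ : ℝ) (m : ℕ) :
    ‖Tsod q θ (q ^ m)‖ ≤
      (1 - 16 * ((q : ℝ) - 1) / (q : ℝ) ^ 2 * |θ - round θ| ^ 2) ^ ((m : ℝ) / 2) := by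
  have hq0 : (0 : ℝ) < q := by positivity
  set G : ℂ := ∑ j ∈ Finset.range q,
    Complex.exp (2 * Real.pi * Complex.I * (j : ℂ) * (θ : ℂ)) with hG
  set F : ℂ := (q : ℂ)⁻¹ * G with hF
  have hT : Tsod q θ (q ^ m) = F ^ m := by
    rw [Tsod, sum_exp_digits_pow hq θ m, hF, mul_pow, ← hG]
    push_cast
    rw [inv_pow]
  set A : ℝ := ‖F‖ with hA
  have hAnn : 0 ≤ A := norm_nonneg F
  set δ : ℝ := |θ - round θ| with hδ
  have hδnn : 0 ≤ δ := abs_nonneg _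
  set a : ℝ := 2 * Real.pi * θ with ha
  have hz : ∀ j : ℕ, Complex.exp (2 * Real.pi * Complex.I * (j : ℂ) * (θ : ℂ)) =
      Complex.exp ((((j : ℝ) * a : ℝ) : ℂ) * Complex.I) := by
    intro j
    rw [show ((((j : ℝ) * a : ℝ)) : ℂ) * Complex.I =
      2 * Real.pi * Complex.I * (j : ℂ) * (θ : ℂ) by rw [ha]; push_cast; ring]
  -- exact expression for |G|²
  have hS : (‖G‖ ^ 2 : ℝ) =
      ∑ p ∈ Finset.range q ×ˢ Finset.range q,
        Real.cos ((p.1 : ℝ) * a - (p.2 : ℝ) * a) := by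
    rw [Complex.sq_norm]
    have h1 : Complex.normSq G = (G * (starRingEnd ℂ) G).re := by
      rw [Complex.mul_conj, Complex.ofReal_re]
    rw [h1, hG, map_sum, Finset.sum_mul_sum, ← Finset.sum_product']
    rw [Complex.re_sum]
    refine Finset.sum_congr rfl fun p _ => ?_
    rw [hz p.1, hz p.2, exp_mul_conj_re]
  -- bound the double sum
  set P : Finset (ℕ × ℕ) :=
    ((Finset.range (q - 1)).image fun j => (j, j + 1)) ∪
      ((Finset.range (q - 1)).image fun j => (j + 1, j)) with hP
  have hPsub : P ⊆ Finset.range q ×ˢ Finset.range q := by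
    intro p hp
    rw [hP] at hp
    rcases Finset.mem_union.mp hp with h | h <;>
      obtain ⟨j, hj, rfl⟩ := Finset.mem_image.mp h <;>
      · rw [Finset.mem_range] at hj
        simp only [Finset.mem_product, Finset.mem_range]
        omega
  have hPsum : ∑ p ∈ P, (1 - Real.cos ((p.1 : ℝ) * a - (p.2 : ℝ) * a)) =
      2 * ((q : ℝ) - 1) * (1 - Real.cos a) := by
    rw [hP, Finset.sum_union]
    · rw [Finset.sum_image (by intro x _ y _ h; simpa using h),
        Finset.sum_image (by intro x _ y _ h; simpa using h)]
      have e1 : ∀ j : ℕ, (1 - Real.cos ((j : ℝ) * a - ((j + 1 : ℕ) : ℝ) * a)) =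
          1 - Real.cos a := by
        intro j
        rw [show (j : ℝ) * a - ((j + 1 : ℕ) : ℝ) * a = -a by push_cast; ring, Real.cos_neg]
      have e2 : ∀ j : ℕ, (1 - Real.cos (((j + 1 : ℕ) : ℝ) * a - (j : ℝ) * a)) =
          1 - Real.cos a := by
        intro j
        rw [show ((j + 1 : ℕ) : ℝ) * a - (j : ℝ) * a = a by push_cast; ring]
      rw [Finset.sum_congr rfl fun j _ => e1 j, Finset.sum_congr rfl fun j _ => e2 j]
      rw [Finset.sum_const, Finset.card_range, nsmul_eq_mul, Nat.cast_sub (by omega : 1 ≤ q)]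
      push_cast
      ring
    · rw [Finset.disjoint_left]
      rintro p h1 h2
      obtain ⟨j, hj, rfl⟩ := Finset.mem_image.mp h1
      obtain ⟨k, hk, hek⟩ := Finset.mem_image.mp h2
      have : k + 1 = j ∧ k = j + 1 := ⟨congrArg Prod.fst hek, congrArg Prod.snd hek⟩
      omega
  have hnonneg : ∀ p ∈ Finset.range q ×ˢ Finset.range q,
      p ∉ P → 0 ≤ 1 - Real.cos ((p.1 : ℝ) * a - (p.2 : ℝ) * a) := by
    intro p _ _
    have := Real.cos_le_one ((p.1 : ℝ) * a - (p.2 : ℝ) * a)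
    linarith
  have hsub : ∑ p ∈ P, (1 - Real.cos ((p.1 : ℝ) * a - (p.2 : ℝ) * a)) ≤
      ∑ p ∈ Finset.range q ×ˢ Finset.range q,
        (1 - Real.cos ((p.1 : ℝ) * a - (p.2 : ℝ) * a)) :=
    Finset.sum_le_sum_of_subset_of_nonneg hPsub hnonneg
  have htot : ∑ p ∈ Finset.range q ×ˢ Finset.range q,
      (1 - Real.cos ((p.1 : ℝ) * a - (p.2 : ℝ) * a)) =
      (q : ℝ) ^ 2 - ∑ p ∈ Finset.range q ×ˢ Finset.range q,
        Real.cos ((p.1 : ℝ) * a - (p.2 : ℝ) * a) := by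
    rw [Finset.sum_sub_distrib, Finset.sum_const, Finset.card_product, Finset.card_range,
      nsmul_eq_mul]
    push_cast
    ring
  have hGsq : ‖G‖ ^ 2 ≤ (q : ℝ) ^ 2 - 2 * ((q : ℝ) - 1) * (1 - Real.cos a) := by
    rw [hS]
    rw [hPsum, htot] at hsub
    linarith
  -- trigonometric lower bound : 1 - cos a ≥ 8 δ²
  have hsin : 4 * δ ^ 2 ≤ Real.sin (Real.pi * θ) ^ 2 := four_normdist_sq_le_sin_sq θ
  have hcos2 : Real.cos a = 1 - 2 * Real.sin (Real.pi * θ) ^ 2 := by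
    rw [ha, show 2 * Real.pi * θ = 2 * (Real.pi * θ) by ring, Real.cos_two_mul]
    nlinarith [Real.sin_sq_add_cos_sq (Real.pi * θ)]
  have hca : 8 * δ ^ 2 ≤ 1 - Real.cos a := by rw [hcos2]; linarith
  -- key bound on A²
  have hAG : A = ‖G‖ / q := by
    rw [hA, hF, norm_mul, norm_inv, Complex.norm_natCast, inv_mul_eq_div]
  have hkey : A ^ 2 ≤ 1 - 16 * ((q : ℝ) - 1) / (q : ℝ) ^ 2 * δ ^ 2 := by
    have hq1 : (1 : ℝ) ≤ (q : ℝ) := by linarith [show (2:ℝ) ≤ (q:ℝ) from by exact_mod_cast hq]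
    have h1 : ‖G‖ ^ 2 ≤ (q : ℝ) ^ 2 - 16 * ((q : ℝ) - 1) * δ ^ 2 := by
      nlinarith [hGsq, hca]
    rw [hAG, div_pow]
    rw [div_le_iff₀ (by positivity)]
    have : (1 - 16 * ((q : ℝ) - 1) / (q : ℝ) ^ 2 * δ ^ 2) * (q : ℝ) ^ 2 =
        (q : ℝ) ^ 2 - 16 * ((q : ℝ) - 1) * δ ^ 2 := by
      field_simp
    rw [this]
    exact h1
  -- conclude via rpow
  rw [hT, norm_pow, ← hA]
  have hrw : (A : ℝ) ^ m = ((A ^ 2 : ℝ)) ^ ((m : ℝ) / 2) := by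
    rw [show (m : ℝ) / 2 = (1 / 2 : ℝ) * (m : ℝ) by ring]
    rw [Real.rpow_mul (by positivity)]
    rw [show ((A : ℝ) ^ 2 : ℝ) ^ ((1 : ℝ) / 2) = A by
      rw [show ((A : ℝ) ^ 2 : ℝ) = A ^ (2 : ℕ) from rfl, ← Real.rpow_natCast (A) 2,
        ← Real.rpow_mul hAnn]
      norm_num]
    rw [Real.rpow_natCast]
  rw [hrw]
  exact Real.rpow_le_rpow (by positivity) hkey (by positivity)
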